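/- For 1 < q < 5/3, μ_q ∈ ℝ, σ_q > 0, the function x ↦ (x-μ_q)²·p_q(x) is Lebesgue integrable on ℝ and ∫_{-∞}^{∞} (x-μ_q)²·p_q(x) dx = ((3-q)/(5-3q))·σ_q²; i.e., the (ordinary) variance of the univariate q-Gaussian equals ((3-q)/(5-3q))·σ_q². -/

import Mathlib

open MeasureTheory

/-- The Euler Beta function `B(a,b) = ∫₀¹ t^(a-1) (1-t)^(b-1) dt`. -/
noncomputable def Beta (a b : ℝ) : ℝ := ∫ t in (0:ℝ)..1, t ^ (a - 1) * (1 - t) ^ (b - 1)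

/-- Normalization constant of the univariate q-Gaussian:
`Z_q = (σ_q²·(3-q)/(q-1))^(1/2) · B(1/2, (3-q)/(2(q-1)))`. -/
noncomputable def Zq (q σq : ℝ) : ℝ :=
  (σq ^ 2 * (3 - q) / (q - 1)) ^ ((1 : ℝ) / 2) * Beta (1 / 2) ((3 - q) / (2 * (q - 1)))

/-- The univariate q-Gaussian density
`p_q(x) = (1/Z_q)·(1 - ((1-q)/(3-q))·(x-μ_q)²/σ_q²)^(1/(1-q))`. -/
noncomputable def pq (q μq σq x : ℝ) : ℝ :=
  (1 / Zq q σq) * (1 - ((1 - q) / (3 - q)) * (x - μq) ^ 2 / σq ^ 2) ^ (1 / (1 - q))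

section QGaussianAux

open Set Real Filter Topology

-- real beta integrand integrable on Ioo 0 1
lemma betaReal_integrableOn {a b : ℝ} (ha : 0 < a) (hb : 0 < b) :
    IntegrableOn (fun u : ℝ => u ^ (a - 1) * (1 - u) ^ (b - 1)) (Ioo 0 1) := by
  have hC : IntegrableOn (fun x : ℝ => (x : ℂ) ^ ((a : ℂ) - 1) * (1 - (x : ℂ)) ^ ((b : ℂ) - 1))
      (Ioo 0 1) := by
    have := (Complex.betaIntegral_convergent (u := (a : ℂ)) (v := (b : ℂ))
      (by simpa using ha) (by simpa using hb)).1
    exact this.mono_set Ioo_subset_Ioc_self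
  have := hC.re
  refine (integrable_congr ?_).mp this
  filter_upwards [ae_restrict_mem measurableSet_Ioo] with x hx
  have hx0 : (0:ℝ) < x := hx.1
  have hx1 : (0:ℝ) < 1 - x := by linarith [hx.2]
  have h1 : ((x : ℂ)) ^ ((a : ℂ) - 1) = ((x ^ (a - 1) : ℝ) : ℂ) := by
    rw [Complex.ofReal_cpow hx0.le]; push_cast; ring_nf
  have h2 : ((1 : ℂ) - (x : ℂ)) ^ ((b : ℂ) - 1) = (((1 - x) ^ (b - 1) : ℝ) : ℂ) := by
    rw [show (1 : ℂ) - (x : ℂ) = ((1 - x : ℝ) : ℂ) by push_cast; ring,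
      Complex.ofReal_cpow hx1.le]; push_cast; ring_nf
  simp [h1, h2, ← Complex.ofReal_mul]

lemma cov_aux {p : ℝ} (hp : 1 / 2 < p) :
    (IntegrableOn (fun u : ℝ => u ^ ((1:ℝ)/2 - 1) * (1 - u) ^ (p - 1/2 - 1)) (Ioo 0 1) ↔
      IntegrableOn (fun t : ℝ => 2 * (1 + t ^ 2) ^ (-p)) (Ioi 0)) ∧
    (∫ u in Ioo (0:ℝ) 1, u ^ ((1:ℝ)/2 - 1) * (1 - u) ^ (p - 1/2 - 1))
      = ∫ t in Ioi (0:ℝ), 2 * (1 + t ^ 2) ^ (-p) := by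
  set f : ℝ → ℝ := fun t => 1 - (1 + t ^ 2)⁻¹ with hf
  set f' : ℝ → ℝ := fun t => 2 * t / (1 + t ^ 2) ^ 2 with hf'
  set g : ℝ → ℝ := fun u => u ^ ((1:ℝ)/2 - 1) * (1 - u) ^ (p - 1/2 - 1) with hg
  have hbase : ∀ t : ℝ, (0:ℝ) < 1 + t ^ 2 := fun t => by positivity
  have hderiv : ∀ t ∈ Ioi (0:ℝ), HasDerivWithinAt f (f' t) (Ioi 0) t := by
    intro t _
    have h1 : HasDerivAt (fun t : ℝ => 1 + t ^ 2) (2 * t) t := by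
      simpa using (hasDerivAt_pow 2 t).const_add 1
    have h2 := (h1.inv (hbase t).ne').const_sub 1
    have h3 : -(-(2 * t) / (1 + t ^ 2) ^ 2) = f' t := by simp [hf']; ring
    exact (h3 ▸ h2).hasDerivWithinAt
  have hinj : InjOn f (Ioi 0) := by
    intro s hs t ht h
    simp only [hf, sub_right_inj, inv_inj, add_right_inj] at h
    have hst : (s - t) * (s + t) = 0 := by nlinarith [h]
    rcases mul_eq_zero.mp hst with h' | h'
    · linarith
    · exfalso
      have hs' : (0:ℝ) < s := hs
      have ht' : (0:ℝ) < t := ht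
      linarith
  have himg : f '' Ioi 0 = Ioo 0 1 := by
    ext u
    constructor
    · rintro ⟨t, ht, rfl⟩
      have h1 : (1 + t ^ 2)⁻¹ < 1 := by
        rw [inv_lt_one_iff₀]; right; nlinarith [mem_Ioi.mp ht]
      have h2 : 0 < (1 + t ^ 2)⁻¹ := by positivity
      constructor
      · simp only [hf]; linarith
      · simp only [hf]; linarith
    · rintro ⟨hu0, hu1⟩
      have h1u : (0:ℝ) < 1 - u := by linarith
      refine ⟨Real.sqrt (u / (1 - u)), mem_Ioi.mpr (Real.sqrt_pos.mpr (by positivity)), ?_⟩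
      have hsq : Real.sqrt (u / (1 - u)) ^ 2 = u / (1 - u) := Real.sq_sqrt (by positivity)
      simp only [hf, hsq]
      have : 1 + u / (1 - u) = (1 - u)⁻¹ := by field_simp; ring
      rw [this, inv_inv]; ring
  have key : ∀ t ∈ Ioi (0:ℝ), |f' t| • g (f t) = 2 * (1 + t ^ 2) ^ (-p) := by
    intro t ht
    have ht : (0:ℝ) < t := ht
    have hb := hbase t
    have habs : |f' t| = 2 * t / (1 + t ^ 2) ^ 2 := abs_of_nonneg (by positivity)
    have hft : f t = t ^ 2 * (1 + t ^ 2)⁻¹ := by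
      simp only [hf]; field_simp; ring
    have h1ft : 1 - f t = (1 + t ^ 2)⁻¹ := by simp [hf]
    have e1 : (t ^ 2 : ℝ) ^ ((1:ℝ)/2 - 1) = t⁻¹ := by
      rw [← Real.rpow_natCast t 2, ← Real.rpow_mul ht.le]
      norm_num
      exact Real.rpow_neg_one t
    have e2 : ∀ r : ℝ, ((1 + t ^ 2)⁻¹ : ℝ) ^ r = (1 + t ^ 2) ^ (-r) := by
      intro r
      rw [Real.inv_rpow hb.le, ← Real.rpow_neg hb.le]
    have hrpow : (1 + t ^ 2 : ℝ) ^ (-((1:ℝ)/2 - 1)) * (1 + t ^ 2) ^ (-(p - 1/2 - 1))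
        = ((1 + t ^ 2) * (1 + t ^ 2)) * (1 + t ^ 2) ^ (-p) := by
      rw [← Real.rpow_add hb]
      have h' : (-((1:ℝ)/2 - 1) + -(p - 1/2 - 1)) = 1 + (1 + -p) := by ring
      rw [h', Real.rpow_add hb, Real.rpow_add hb, Real.rpow_one]; ring
    rw [smul_eq_mul, habs]
    simp only [hg]
    rw [h1ft, hft, Real.mul_rpow (by positivity) (by positivity), e1, e2, e2,
      mul_assoc (t⁻¹), hrpow]
    field_simp
  constructor
  · rw [← himg,
      integrableOn_image_iff_integrableOn_abs_deriv_smul measurableSet_Ioi hderiv hinj g]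
    exact integrableOn_congr_fun (fun t ht => key t ht) measurableSet_Ioi
  · rw [← himg,
      integral_image_eq_integral_abs_deriv_smul measurableSet_Ioi hderiv hinj g]
    exact setIntegral_congr_fun measurableSet_Ioi key

-- Beta as a set integral over Ioo
lemma Beta_eq_Ioo (a b : ℝ) :
    Beta a b = ∫ u in Ioo (0:ℝ) 1, u ^ (a - 1) * (1 - u) ^ (b - 1) := by
  rw [Beta, intervalIntegral.integral_of_le zero_le_one, integral_Ioc_eq_integral_Ioo]

lemma beta_exp_eq {p : ℝ} : (p - 1/2 - 1 : ℝ) = p - 1/2 - 1 := rfl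

lemma intA {p : ℝ} (hp : 1 / 2 < p) :
    IntegrableOn (fun t : ℝ => (1 + t ^ 2) ^ (-p)) (Ioi 0) ∧
      Beta (1/2) (p - 1/2) = 2 * ∫ t in Ioi (0:ℝ), (1 + t ^ 2) ^ (-p) := by
  have hb0 : (0:ℝ) < p - 1/2 := by linarith
  have hbi := betaReal_integrableOn (a := 1/2) (b := p - 1/2) (by norm_num) hb0
  have hcov := cov_aux hp
  have h2 : IntegrableOn (fun t : ℝ => 2 * (1 + t ^ 2) ^ (-p)) (Ioi 0) := hcov.1.mp hbi
  have h1 : IntegrableOn (fun t : ℝ => (1 + t ^ 2) ^ (-p)) (Ioi 0) := by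
    have := h2.const_mul (1/2 : ℝ)
    refine (integrable_congr ?_).mp this
    filter_upwards with t
    ring
  refine ⟨h1, ?_⟩
  rw [Beta_eq_Ioo, hcov.2, MeasureTheory.integral_const_mul]

-- even extension
lemma integrable_of_even {f : ℝ → ℝ} (hf : ∀ x : ℝ, f (-x) = f x)
    (h : IntegrableOn f (Ioi 0)) : Integrable f := by
  have int_Iic : IntegrableOn f (Iic 0) := by
    rw [← Measure.map_neg_eq_self (volume : Measure ℝ)]
    have m : MeasurableEmbedding fun x : ℝ => -x :=
      (Homeomorph.neg ℝ).measurableEmbedding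
    rw [m.integrableOn_map_iff]
    have : (f ∘ fun x : ℝ => -x) = f := by ext x; exact hf x
    rw [this]
    simp only [neg_preimage, neg_Iic, neg_zero]
    exact Iff.mpr integrableOn_Ici_iff_integrableOn_Ioi h
  have : IntegrableOn f (Iic 0 ∪ Ioi 0) := int_Iic.union h
  rwa [Iic_union_Ioi, integrableOn_univ] at this

lemma f0_integrable {p : ℝ} (hp : 1 / 2 < p) :
    Integrable (fun t : ℝ => (1 + t ^ 2) ^ (-p)) :=
  integrable_of_even (fun x => by rw [neg_pow]; norm_num) (intA hp).1

lemma f0_integral {p : ℝ} (hp : 1 / 2 < p) :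
    (∫ t : ℝ, (1 + t ^ 2) ^ (-p)) = Beta (1/2) (p - 1/2) := by
  have := integral_comp_abs (f := fun x : ℝ => (1 + x ^ 2) ^ (-p))
  have heq : (fun x : ℝ => (1 + |x| ^ 2) ^ (-p)) = fun x : ℝ => (1 + x ^ 2) ^ (-p) := by
    ext x; rw [sq_abs]
  rw [heq] at this
  rw [this, (intA hp).2]

lemma f2_integrable {p : ℝ} (hp : 3 / 2 < p) :
    Integrable (fun t : ℝ => t ^ 2 * (1 + t ^ 2) ^ (-p)) := by
  have hp1 : 1 / 2 < p - 1 := by linarith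
  refine (f0_integrable hp1).mono ?_ ?_
  · apply Continuous.aestronglyMeasurable
    exact continuous_pow 2 |>.mul
      ((continuous_const.add (continuous_pow 2)).rpow_const
        (fun x => Or.inl (by simp only [Pi.add_apply]; positivity)))
  · filter_upwards with t
    have hb : (0:ℝ) < 1 + t ^ 2 := by positivity
    have h1 : ‖t ^ 2 * (1 + t ^ 2) ^ (-p)‖ = t ^ 2 * (1 + t ^ 2) ^ (-p) := by
      rw [Real.norm_eq_abs, abs_of_nonneg (by positivity)]
    rw [h1, Real.norm_eq_abs, abs_of_nonneg (Real.rpow_nonneg hb.le _)]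
    have h2 : (1 + t ^ 2 : ℝ) ^ (-(p-1)) = (1 + t ^ 2) * (1 + t ^ 2) ^ (-p) := by
      rw [show (-(p-1) : ℝ) = 1 + -p by ring, Real.rpow_add hb, Real.rpow_one]
    rw [h2]
    have := Real.rpow_nonneg hb.le (-p)
    nlinarith [sq_nonneg t]

lemma ibp {p : ℝ} (hp : 3 / 2 < p) :
    (∫ t : ℝ, t ^ 2 * (1 + t ^ 2) ^ (-p))
      = (∫ t : ℝ, (1 + t ^ 2) ^ (-p)) / (2 * p - 3) := by
  have hp1 : 1 / 2 < p := by linarith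
  set G : ℝ → ℝ := fun t => t * (1 + t ^ 2) ^ (1 - p) with hG
  set D : ℝ → ℝ := fun t => (1 + t ^ 2) ^ (-p) + (3 - 2 * p) * (t ^ 2 * (1 + t ^ 2) ^ (-p))
    with hD
  have hbase : ∀ t : ℝ, (0:ℝ) < 1 + t ^ 2 := fun t => by positivity
  have hderiv : ∀ t : ℝ, HasDerivAt G (D t) t := by
    intro t
    have hb := hbase t
    have h1 : HasDerivAt (fun t : ℝ => 1 + t ^ 2) (2 * t) t := by
      simpa using (hasDerivAt_pow 2 t).const_add 1
    have h2 : HasDerivAt (fun t : ℝ => (1 + t ^ 2) ^ (1 - p))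
        ((2 * t) * (1 - p) * (1 + t ^ 2) ^ (1 - p - 1)) t :=
      h1.rpow_const (Or.inl hb.ne')
    have h3 := (hasDerivAt_id t).mul h2
    have key : 1 * (1 + t ^ 2) ^ (1 - p)
        + id t * (2 * t * (1 - p) * (1 + t ^ 2) ^ (1 - p - 1)) = D t := by
      have e1 : (1 + t ^ 2 : ℝ) ^ (1 - p - 1) = (1 + t ^ 2) ^ (-p) := by norm_num
      have e2 : (1 + t ^ 2 : ℝ) ^ (1 - p) = (1 + t ^ 2) * (1 + t ^ 2) ^ (-p) := by
        rw [show (1 - p : ℝ) = 1 + -p by ring, Real.rpow_add hb, Real.rpow_one]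
      rw [e1, e2]; simp only [hD, id]; ring
    exact key ▸ h3
  have hbound : ∀ t : ℝ, 0 ≤ t → ‖G t‖ ≤ (1 + t ^ 2) ^ (3/2 - p) := by
    intro t ht
    have hb := hbase t
    have h1 : t ≤ (1 + t ^ 2) ^ ((1:ℝ)/2) := by
      rw [← Real.sqrt_eq_rpow]
      calc t = Real.sqrt (t ^ 2) := (Real.sqrt_sq ht).symm
        _ ≤ Real.sqrt (1 + t ^ 2) := Real.sqrt_le_sqrt (by linarith)
    have h2 : (0:ℝ) ≤ (1 + t ^ 2) ^ (1 - p) := Real.rpow_nonneg hb.le _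
    have h3 : (1 + t ^ 2 : ℝ) ^ ((1:ℝ)/2) * (1 + t ^ 2) ^ (1 - p)
        = (1 + t ^ 2) ^ (3/2 - p) := by
      rw [← Real.rpow_add hb, show ((1:ℝ)/2 + (1 - p)) = 3/2 - p by ring]
    rw [Real.norm_eq_abs, hG, abs_of_nonneg (by positivity : (0:ℝ) ≤ t * (1 + t^2) ^ (1-p))]
    calc t * (1 + t ^ 2) ^ (1 - p) ≤ (1 + t ^ 2) ^ ((1:ℝ)/2) * (1 + t ^ 2) ^ (1 - p) :=
          mul_le_mul_of_nonneg_right h1 h2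
      _ = (1 + t ^ 2) ^ (3/2 - p) := h3
  have hlim : Tendsto (fun t : ℝ => (1 + t ^ 2) ^ ((3:ℝ)/2 - p)) atTop (𝓝 0) := by
    have h1 : Tendsto (fun t : ℝ => 1 + t ^ 2) atTop atTop :=
      tendsto_atTop_add_const_left _ 1 (tendsto_pow_atTop two_ne_zero)
    have h2 : Tendsto (fun x : ℝ => x ^ (-(p - 3/2))) atTop (𝓝 0) :=
      tendsto_rpow_neg_atTop (by linarith)
    have := h2.comp h1
    simpa [Function.comp_def, show (-(p - 3/2) : ℝ) = 3/2 - p by ring] using this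
  have htop : Tendsto G atTop (𝓝 0) := by
    apply squeeze_zero_norm' _ hlim
    filter_upwards [eventually_ge_atTop (0:ℝ)] with t ht
    exact hbound t ht
  have hbot : Tendsto G atBot (𝓝 0) := by
    have hGodd : ∀ t : ℝ, G (-t) = -G t := by
      intro t; simp only [hG]; rw [neg_pow]; norm_num
    have h1 : Tendsto (fun t : ℝ => G (-t)) atTop (𝓝 0) := by
      simp only [hGodd]; simpa using htop.neg
    have h2 := h1.comp tendsto_neg_atBot_atTop
    have h3 : ((fun t : ℝ => G (-t)) ∘ Neg.neg) = G := by ext x; simp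
    rwa [h3] at h2
  have hDint : Integrable D := by
    exact (f0_integrable hp1).add ((f2_integrable hp).const_mul _)
  have hIoi : ∫ t in Ioi (0:ℝ), D t = 0 - G 0 :=
    integral_Ioi_of_hasDerivAt_of_tendsto' (fun x _ => hderiv x) hDint.integrableOn htop
  have hIic : ∫ t in Iic (0:ℝ), D t = G 0 - 0 :=
    integral_Iic_of_hasDerivAt_of_tendsto' (fun x _ => hderiv x) hDint.integrableOn hbot
  have hG0 : G 0 = 0 := by simp [hG]
  have hsplit : ∫ t : ℝ, D t = (∫ t in Iic (0:ℝ), D t) + ∫ t in Ioi (0:ℝ), D t := by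
    rw [← setIntegral_union (Iic_disjoint_Ioi le_rfl) measurableSet_Ioi
      hDint.integrableOn hDint.integrableOn, Iic_union_Ioi, Measure.restrict_univ]
  have hzero : ∫ t : ℝ, D t = 0 := by rw [hsplit, hIoi, hIic, hG0]; ring
  have hadd : ∫ t : ℝ, D t = (∫ t : ℝ, (1 + t ^ 2) ^ (-p))
      + (3 - 2 * p) * ∫ t : ℝ, t ^ 2 * (1 + t ^ 2) ^ (-p) := by
    rw [hD, integral_add (f0_integrable hp1) ((f2_integrable hp).const_mul _),
      MeasureTheory.integral_const_mul]
  have h23 : (2 * p - 3 : ℝ) ≠ 0 := by linarith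
  have := hzero ▸ hadd
  rw [eq_div_iff h23]
  linear_combination this

lemma Beta_pos {a b : ℝ} (ha : 0 < a) (hb : 0 < b) : 0 < Beta a b := by
  have hInt : IntervalIntegrable (fun u : ℝ => u ^ (a - 1) * (1 - u) ^ (b - 1)) volume 0 1 := by
    rw [intervalIntegrable_iff_integrableOn_Ioc_of_le zero_le_one,
      integrableOn_Ioc_iff_integrableOn_Ioo]
    exact betaReal_integrableOn ha hb
  exact intervalIntegral.intervalIntegral_pos_of_pos_on hInt
    (fun x hx => mul_pos (Real.rpow_pos_of_pos hx.1 _)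
      (Real.rpow_pos_of_pos (by linarith [hx.2]) _)) one_pos

/-- For `1 < q < 5/3`, `x ↦ (x-μ_q)²·p_q(x)` is Lebesgue integrable and
`∫ (x-μ_q)²·p_q(x) dx = ((3-q)/(5-3q))·σ_q²`: the ordinary variance of the
univariate q-Gaussian equals `((3-q)/(5-3q))·σ_q²`. -/
theorem qGaussian_variance (q μq σq : ℝ) (hq1 : 1 < q) (hq2 : q < 5 / 3) (hσ : 0 < σq) :
    Integrable (fun x : ℝ => (x - μq) ^ 2 * pq q μq σq x) ∧
    (∫ x : ℝ, (x - μq) ^ 2 * pq q μq σq x) = ((3 - q) / (5 - 3 * q)) * σq ^ 2 := by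
  have hq1' : (0:ℝ) < q - 1 := by linarith
  have h3q : (0:ℝ) < 3 - q := by linarith
  have h53 : (0:ℝ) < 5 - 3 * q := by linarith
  set p : ℝ := 1 / (q - 1) with hpdef
  have hp : 3 / 2 < p := by
    rw [hpdef, lt_div_iff₀ hq1']
    linarith
  have hp1 : 1 / 2 < p := by linarith
  set s : ℝ := σq * Real.sqrt ((3 - q) / (q - 1)) with hsdef
  have harg : (0:ℝ) < (3 - q) / (q - 1) := div_pos h3q hq1'
  have hs : 0 < s := mul_pos hσ (Real.sqrt_pos.mpr harg)
  have hs2 : s ^ 2 = σq ^ 2 * ((3 - q) / (q - 1)) := by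
    rw [hsdef, mul_pow, Real.sq_sqrt harg.le]
  clear_value p s
  have hB : 0 < Beta (1/2) (p - 1/2) := Beta_pos (by norm_num) (by linarith)
  have hZarg : σq ^ 2 * (3 - q) / (q - 1) = s ^ 2 := by rw [hs2]; ring
  have hZ : Zq q σq = s * Beta (1/2) (p - 1/2) := by
    rw [Zq, hZarg, ← Real.sqrt_eq_rpow, Real.sqrt_sq hs.le,
      show (3 - q) / (2 * (q - 1)) = p - 1/2 by rw [hpdef]; field_simp; ring]
  have hZpos : 0 < Zq q σq := by rw [hZ]; exact mul_pos hs hB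
  have hkey : ∀ x : ℝ, (x - μq) ^ 2 * pq q μq σq x
      = (s ^ 2 / Zq q σq) * (((x - μq)/s) ^ 2 * (1 + ((x - μq)/s) ^ 2) ^ (-p)) := by
    intro x
    have hbase : 1 - ((1 - q) / (3 - q)) * (x - μq) ^ 2 / σq ^ 2
        = 1 + ((x - μq)/s) ^ 2 := by
      rw [div_pow, hs2]
      field_simp
      ring
    have hexp : 1 / (1 - q) = -p := by
      rw [show (1:ℝ) - q = -(q - 1) by ring, div_neg, hpdef]
    rw [pq, hbase, hexp]
    have hxx : (x - μq) ^ 2 = s ^ 2 * ((x - μq)/s) ^ 2 := by field_simp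
    rw [hxx]; ring
  have hF : Integrable (fun x : ℝ => ((x - μq)/s) ^ 2 * (1 + ((x - μq)/s) ^ 2) ^ (-p)) := by
    have h1 := (f2_integrable hp).comp_div (R := s) hs.ne'
    have h2 := h1.comp_sub_right μq
    simpa using h2
  have hint : Integrable (fun x : ℝ => (x - μq) ^ 2 * pq q μq σq x) := by
    refine (hF.const_mul (s ^ 2 / Zq q σq)).congr ?_
    filter_upwards with x
    exact (hkey x).symm
  have hIF : (∫ x : ℝ, ((x - μq)/s) ^ 2 * (1 + ((x - μq)/s) ^ 2) ^ (-p))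
      = s * (Beta (1/2) (p - 1/2) / (2 * p - 3)) := by
    have h1 : (fun x : ℝ => ((x - μq)/s) ^ 2 * (1 + ((x - μq)/s) ^ 2) ^ (-p))
        = fun x : ℝ => (fun t : ℝ => (t/s) ^ 2 * (1 + (t/s) ^ 2) ^ (-p)) (x - μq) := rfl
    rw [h1, integral_sub_right_eq_self (fun t : ℝ => (t/s) ^ 2 * (1 + (t/s) ^ 2) ^ (-p)) μq]
    have h2 := MeasureTheory.Measure.integral_comp_div
      (fun t : ℝ => t ^ 2 * (1 + t ^ 2) ^ (-p)) s
    rw [h2, ibp hp, f0_integral hp1, abs_of_pos hs, smul_eq_mul]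
  have hI : (∫ x : ℝ, (x - μq) ^ 2 * pq q μq σq x)
      = (s ^ 2 / Zq q σq) * (s * (Beta (1/2) (p - 1/2) / (2 * p - 3))) := by
    rw [integral_congr_ae (ae_of_all _ hkey), MeasureTheory.integral_const_mul, hIF]
  refine ⟨hint, ?_⟩
  have h2p3 : 2 * p - 3 = (5 - 3 * q) / (q - 1) := by rw [hpdef]; field_simp; ring
  rw [hI, hZ, h2p3]
  have hstep : s ^ 2 / (s * Beta (1/2) (p - 1/2))
      * (s * (Beta (1/2) (p - 1/2) / ((5 - 3 * q) / (q - 1))))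
      = s ^ 2 * ((q - 1) / (5 - 3 * q)) := by
    have hgen : ∀ a b c : ℝ, a ≠ 0 → b ≠ 0 → c ≠ 0 →
        a ^ 2 / (a * b) * (a * (b / c)) = a ^ 2 / c := by
      intro a b c ha hb hc; field_simp
    rw [hgen s _ _ hs.ne' hB.ne' (div_pos h53 hq1').ne', div_eq_mul_inv, inv_div]
  rw [hstep, hs2]
  field_simp

end QGaussianAux
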